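/- arXiv:2509.26367 — 2 statements merged into one kernel-verified Lean document; each statement's English description precedes it below -/
import Mathlib

section
/- For every positive integer j, the integral ∫₀^π cos(2jx) · ln(sin x) dx equals -π/(2j). -/
open Real

lemma aux_abs_sin_nat_mul_le (n : ℕ) (x : ℝ) : |Real.sin (n * x)| ≤ n * |Real.sin x| := by
  induction n with
  | zero => simp
  | succ n ih =>
    have h : ((n + 1 : ℕ) : ℝ) * x = n * x + x := by push_cast; ring
    rw [h, Real.sin_add]
    calc |Real.sin (n*x) * Real.cos x + Real.cos (n*x) * Real.sin x|
        ≤ |Real.sin (n*x) * Real.cos x| + |Real.cos (n*x) * Real.sin x| := abs_add_le _ _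
      _ ≤ |Real.sin (n*x)| * 1 + 1 * |Real.sin x| := by
          rw [abs_mul, abs_mul]
          gcongr
          · exact Real.abs_cos_le_one x
          · exact Real.abs_cos_le_one _
      _ ≤ n * |Real.sin x| + |Real.sin x| := by
          rw [mul_one, one_mul]
          gcongr
      _ = (n + 1 : ℕ) * |Real.sin x| := by push_cast; ring

lemma aux_sin_odd (m : ℕ) (x : ℝ) :
    Real.sin ((2 * m + 1) * x)
      = Real.sin x + ∑ k ∈ Finset.range m, 2 * Real.cos (2 * (k + 1) * x) * Real.sin x := by
  induction m with
  | zero => simp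
  | succ m ih =>
    rw [Finset.sum_range_succ, ← add_assoc, ← ih]
    push_cast
    rw [show (2 * ((m : ℝ) + 1) + 1) * x = 2 * ((m : ℝ) + 1) * x + x by ring,
      show (2 * (m : ℝ) + 1) * x = 2 * ((m : ℝ) + 1) * x - x by ring,
      Real.sin_add, Real.sin_sub]
    ring

lemma aux_identity (m : ℕ) (x : ℝ) :
    Real.sin x * (1 + Real.cos (2 * (m + 1) * x)
        + ∑ k ∈ Finset.range m, 2 * Real.cos (2 * (k + 1) * x))
      = Real.sin (2 * (m + 1) * x) * Real.cos x := by
  have h := aux_sin_odd m x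
  push_cast at h
  rw [show ((2 * (m : ℝ) + 1)) * x = 2 * ((m : ℝ) + 1) * x - x by ring, Real.sin_sub] at h
  rw [mul_add, mul_add, Finset.mul_sum]
  have : ∀ k ∈ Finset.range m, Real.sin x * (2 * Real.cos (2 * ((k : ℝ) + 1) * x))
      = 2 * Real.cos (2 * ((k : ℝ) + 1) * x) * Real.sin x := fun k _ => by ring
  rw [Finset.sum_congr rfl this]
  linarith [h]
open Real

lemma aux_neg_log_le {y : ℝ} (hy : 0 < y) : -Real.log y ≤ 2 * y ^ (-(1:ℝ)/2) := by
  have h1 : Real.log (y ^ (-(1:ℝ)/2)) = (-(1:ℝ)/2) * Real.log y := Real.log_rpow hy _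
  have h2 : Real.log (y ^ (-(1:ℝ)/2)) ≤ y ^ (-(1:ℝ)/2) - 1 :=
    Real.log_le_sub_one_of_pos (Real.rpow_pos_of_pos hy _)
  have h3 : (0:ℝ) ≤ y ^ (-(1:ℝ)/2) := (Real.rpow_pos_of_pos hy _).le
  nlinarith

lemma aux_log_sin_bound {x : ℝ} (hx : x ∈ Set.Ioo 0 π) :
    |Real.log (Real.sin x)| ≤ 2 * Real.sqrt (π/2) * (x ^ (-(1:ℝ)/2) + (π - x) ^ (-(1:ℝ)/2)) := by
  have hsin : 0 < Real.sin x := Real.sin_pos_of_pos_of_lt_pi hx.1 hx.2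
  have hsin1 : Real.sin x ≤ 1 := Real.sin_le_one x
  have habs : |Real.log (Real.sin x)| = -Real.log (Real.sin x) := by
    rw [abs_of_nonpos (Real.log_nonpos hsin.le hsin1)]
  rw [habs]
  have hx1 : (0:ℝ) ≤ x ^ (-(1:ℝ)/2) := Real.rpow_nonneg hx.1.le _
  have hx2 : (0:ℝ) ≤ (π - x) ^ (-(1:ℝ)/2) := Real.rpow_nonneg (by linarith [hx.2] : (0:ℝ) ≤ π - x) _
  have hsq : (0:ℝ) ≤ Real.sqrt (π/2) := Real.sqrt_nonneg _
  have hc : Real.sqrt (π/2) = ((2:ℝ)/π) ^ (-(1:ℝ)/2) := by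
    rw [Real.sqrt_eq_rpow, show (-(1:ℝ)/2) = -(1/2) by ring,
      Real.rpow_neg (by positivity), ← Real.inv_rpow (by positivity), inv_div]
  have key : (Real.sin x) ^ (-(1:ℝ)/2) ≤ Real.sqrt (π/2) * (x ^ (-(1:ℝ)/2) + (π - x) ^ (-(1:ℝ)/2)) := by
    rcases le_total x (π/2) with h | h
    · have hsge : (2/π) * x ≤ Real.sin x := Real.mul_le_sin hx.1.le h
      have h1 : (Real.sin x) ^ (-(1:ℝ)/2) ≤ ((2/π) * x) ^ (-(1:ℝ)/2) :=
        Real.rpow_le_rpow_of_nonpos (mul_pos (by positivity) hx.1) hsge (by norm_num)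
      have h2 : ((2/π) * x) ^ (-(1:ℝ)/2) = (2/π) ^ (-(1:ℝ)/2) * x ^ (-(1:ℝ)/2) :=
        Real.mul_rpow (by positivity) hx.1.le
      rw [hc]
      nlinarith [Real.rpow_nonneg (show (0:ℝ) ≤ 2/π by positivity) (-(1:ℝ)/2)]
    · have hpx : 0 < π - x := by linarith [hx.2]
      have hsge : (2/π) * (π - x) ≤ Real.sin x := by
        rw [← Real.sin_pi_sub]
        exact Real.mul_le_sin hpx.le (by linarith)
      have h1 : (Real.sin x) ^ (-(1:ℝ)/2) ≤ ((2/π) * (π - x)) ^ (-(1:ℝ)/2) :=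
        Real.rpow_le_rpow_of_nonpos (by positivity) hsge (by norm_num)
      have h2 : ((2/π) * (π - x)) ^ (-(1:ℝ)/2) = (2/π) ^ (-(1:ℝ)/2) * (π - x) ^ (-(1:ℝ)/2) :=
        Real.mul_rpow (by positivity) hpx.le
      rw [hc]
      nlinarith [Real.rpow_nonneg (show (0:ℝ) ≤ 2/π by positivity) (-(1:ℝ)/2)]
  calc -Real.log (Real.sin x) ≤ 2 * (Real.sin x) ^ (-(1:ℝ)/2) := aux_neg_log_le hsin
    _ ≤ 2 * (Real.sqrt (π/2) * (x ^ (-(1:ℝ)/2) + (π - x) ^ (-(1:ℝ)/2))) := by linarith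
    _ = 2 * Real.sqrt (π/2) * (x ^ (-(1:ℝ)/2) + (π - x) ^ (-(1:ℝ)/2)) := by ring
open Real MeasureTheory intervalIntegral

lemma aux_intervalIntegrable (c : ℝ) :
    IntervalIntegrable (fun x => Real.cos (c * x) * Real.log (Real.sin x)) volume 0 π := by
  have hmaj : IntervalIntegrable
      (fun x => 2 * Real.sqrt (π/2) * (x ^ (-(1:ℝ)/2) + (π - x) ^ (-(1:ℝ)/2))) volume 0 π := by
    apply IntervalIntegrable.const_mul
    apply IntervalIntegrable.add
    · exact intervalIntegrable_rpow' (by norm_num)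
    · have h := ((intervalIntegrable_rpow' (a := 0) (b := π)
        (r := -(1:ℝ)/2) (by norm_num)).comp_sub_left π)
      simpa using h.symm
  apply hmaj.mono_fun'
  · exact ((Real.measurable_cos.comp (measurable_id.const_mul c)).mul
      (Real.measurable_log.comp Real.measurable_sin)).aestronglyMeasurable
  · rw [Filter.EventuallyLE, MeasureTheory.ae_restrict_iff' measurableSet_uIoc]
    apply MeasureTheory.ae_of_all
    intro x hx
    rw [Set.uIoc_of_le Real.pi_pos.le] at hx
    by_cases hxpi : x = π
    · subst hxpi
      simp only [Real.sin_pi, Real.log_zero, mul_zero, norm_zero]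
      have h1 : (0:ℝ) ≤ π ^ (-(1:ℝ)/2) := Real.rpow_nonneg Real.pi_pos.le _
      have h2 : (0:ℝ) ≤ (π - π) ^ (-(1:ℝ)/2) := by
        rw [sub_self]
        exact Real.rpow_nonneg le_rfl _
      positivity
    · have hxIoo : x ∈ Set.Ioo 0 π := ⟨hx.1, lt_of_le_of_ne hx.2 hxpi⟩
      have hb := aux_log_sin_bound hxIoo
      calc ‖Real.cos (c * x) * Real.log (Real.sin x)‖
          = |Real.cos (c * x)| * |Real.log (Real.sin x)| := abs_mul _ _
        _ ≤ 1 * |Real.log (Real.sin x)| := by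
            gcongr; exact Real.abs_cos_le_one _
        _ = |Real.log (Real.sin x)| := one_mul _
        _ ≤ 2 * Real.sqrt (π/2) * (x ^ (-(1:ℝ)/2) + (π - x) ^ (-(1:ℝ)/2)) := hb

theorem integral_cos_mul_log_sin (j : ℕ) (hj : 1 ≤ j) :
    ∫ x in (0:ℝ)..Real.pi, Real.cos (2 * j * x) * Real.log (Real.sin x)
      = -Real.pi / (2 * j) := by
  obtain ⟨m, rfl⟩ : ∃ m, j = m + 1 := ⟨j - 1, (Nat.succ_pred_eq_of_pos hj).symm⟩
  push_cast
  set n : ℝ := (m : ℝ) + 1 with hn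
  have hnpos : 0 < n := by positivity
  have h2n : (2 * n) ≠ 0 := by positivity
  set F : ℝ → ℝ := fun x => (Real.sin (2*n*x) * Real.log (Real.sin x)
      - (x + Real.sin (2*n*x) / (2*n)
         + ∑ k ∈ Finset.range m, Real.sin (2*((k:ℝ)+1)*x) / ((k:ℝ)+1))) / (2*n) with hF
  have hd_sin : ∀ (c x : ℝ), HasDerivAt (fun y => Real.sin (c*y)) (Real.cos (c*x) * c) x := by
    intro c x
    have h := (Real.hasDerivAt_sin (c*x)).comp x ((hasDerivAt_id x).const_mul c)
    simp only [Function.comp_def, id, mul_one] at h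
    exact h
  have hder : ∀ x ∈ Set.Ioo 0 π, HasDerivAt F (Real.cos (2*n*x) * Real.log (Real.sin x)) x := by
    intro x hx
    have hsin : 0 < Real.sin x := Real.sin_pos_of_pos_of_lt_pi hx.1 hx.2
    have hd_log : HasDerivAt (fun y => Real.log (Real.sin y)) (Real.cos x / Real.sin x) x :=
      (Real.hasDerivAt_sin x).log hsin.ne'
    have hd_G : HasDerivAt (fun y => Real.sin (2*n*y) * Real.log (Real.sin y))
        (Real.cos (2*n*x) * (2*n) * Real.log (Real.sin x)
          + Real.sin (2*n*x) * (Real.cos x / Real.sin x)) x :=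
      (hd_sin (2*n) x).mul hd_log
    have hd_sum : HasDerivAt
        (fun y => ∑ k ∈ Finset.range m, Real.sin (2*((k:ℝ)+1)*y) / ((k:ℝ)+1))
        (∑ k ∈ Finset.range m, Real.cos (2*((k:ℝ)+1)*x) * (2*((k:ℝ)+1)) / ((k:ℝ)+1)) x :=
      HasDerivAt.fun_sum fun k _ => (hd_sin _ x).div_const _
    have hd_H : HasDerivAt
        (fun y => y + Real.sin (2*n*y)/(2*n)
          + ∑ k ∈ Finset.range m, Real.sin (2*((k:ℝ)+1)*y) / ((k:ℝ)+1))
        (1 + Real.cos (2*n*x)*(2*n)/(2*n)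
          + ∑ k ∈ Finset.range m, Real.cos (2*((k:ℝ)+1)*x) * (2*((k:ℝ)+1)) / ((k:ℝ)+1)) x :=
      ((hasDerivAt_id x).add ((hd_sin (2*n) x).div_const _)).add hd_sum
    have hd_F := (hd_G.sub hd_H).div_const (2*n)
    refine hd_F.congr_deriv (Eq.symm ?_)
    have hsum_simp : ∑ k ∈ Finset.range m, Real.cos (2*((k:ℝ)+1)*x) * (2*((k:ℝ)+1)) / ((k:ℝ)+1)
        = ∑ k ∈ Finset.range m, 2 * Real.cos (2*((k:ℝ)+1)*x) := by
      refine Finset.sum_congr rfl fun k _ => ?_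
      have hk : ((k:ℝ)+1) ≠ 0 := by positivity
      field_simp
    rw [hsum_simp]
    have hid := aux_identity m x
    rw [← hn] at hid
    have hP : 1 + Real.cos (2*n*x) + ∑ k ∈ Finset.range m, 2 * Real.cos (2*((k:ℝ)+1)*x)
        = Real.sin (2*n*x) * Real.cos x / Real.sin x := by
      rw [eq_div_iff hsin.ne']
      linarith [hid]
    rw [mul_div_assoc, div_self h2n, mul_one]
    rw [hP]
    field_simp
    ring
  have hcont : ContinuousOn F (Set.Icc 0 π) := by
    apply ContinuousOn.div_const
    apply ContinuousOn.sub
    · intro x hx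
      by_cases hxi : x ∈ Set.Ioo 0 π
      · have hsin : 0 < Real.sin x := Real.sin_pos_of_pos_of_lt_pi hxi.1 hxi.2
        exact (((Real.continuous_sin.comp (continuous_const.mul continuous_id)).continuousAt).mul
          ((Real.continuousAt_log hsin.ne').comp Real.continuous_sin.continuousAt)).continuousWithinAt
      · have hsinx : Real.sin x = 0 := by
          rcases eq_or_lt_of_le hx.1 with h0 | h0
          · rw [← h0]; simp
          rcases eq_or_lt_of_le hx.2 with h1 | h1
          · rw [h1, Real.sin_pi]
          · exact absurd ⟨h0, h1⟩ hxi
        have hGx : Real.sin (2*n*x) * Real.log (Real.sin x) = 0 := by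
          rw [hsinx, Real.log_zero, mul_zero]
        unfold ContinuousWithinAt
        simp only [hGx]
        apply squeeze_zero_norm (a := fun t => (2*n) * |Real.negMulLog (Real.sin t)|)
        · intro t
          have habs := aux_abs_sin_nat_mul_le (2*(m+1)) t
          push_cast at habs
          rw [Real.norm_eq_abs, abs_mul, Real.negMulLog_eq_neg]
          simp only [abs_neg, abs_mul]
          calc |Real.sin (2*n*t)| * |Real.log (Real.sin t)|
              ≤ (2*n) * |Real.sin t| * |Real.log (Real.sin t)| := by
                apply mul_le_mul_of_nonneg_right _ (abs_nonneg _)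
                convert habs using 2
            _ = (2*n) * (|Real.sin t| * |Real.log (Real.sin t)|) := by ring
        · have hb : Continuous fun t => (2*n) * |Real.negMulLog (Real.sin t)| :=
            continuous_const.mul ((Real.continuous_negMulLog.comp Real.continuous_sin).abs)
          have hb0 : (2*n) * |Real.negMulLog (Real.sin x)| = 0 := by
            rw [hsinx, Real.negMulLog_zero, abs_zero, mul_zero]
          have := hb.continuousWithinAt (s := Set.Icc 0 π) (x := x)
          rwa [ContinuousWithinAt, hb0] at this
    · apply Continuous.continuousOn
      apply Continuous.add
      · exact continuous_id.add ((Real.continuous_sin.comp (continuous_const.mul continuous_id)).div_const _)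
      · exact continuous_finset_sum _ fun k _ =>
          (Real.continuous_sin.comp (continuous_const.mul continuous_id)).div_const _
  have key := intervalIntegral.integral_eq_sub_of_hasDeriv_right_of_le Real.pi_pos.le hcont
      (fun x hx => (hder x hx).hasDerivWithinAt) (aux_intervalIntegrable (2*n))
  rw [key, hF]
  have hsin2npi : Real.sin (2*n*π) = 0 := by
    have : 2*n*π = ((2*(m+1) : ℕ) : ℝ) * π := by rw [hn]; push_cast; ring
    rw [this, Real.sin_nat_mul_pi]
  have hsum0 : ∑ k ∈ Finset.range m, Real.sin (2*((k:ℝ)+1)*π) / ((k:ℝ)+1) = 0 := by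
    refine Finset.sum_eq_zero fun k _ => ?_
    have : 2*((k:ℝ)+1)*π = ((2*(k+1) : ℕ) : ℝ) * π := by push_cast; ring
    rw [this, Real.sin_nat_mul_pi, zero_div]
  simp only [hsin2npi, Real.sin_pi, Real.log_zero, mul_zero, zero_mul, zero_div, zero_add,
    zero_sub, hsum0, add_zero, mul_zero]
  simp [Real.sin_zero]
end

section
/- With u₁(y) = (1/2)[-2 + y ln((1+y)/(1-y)) + ln(1-y²)], the constant C₁ := -(1/2)∫_{-1}^1 u₁(y) dy equals 3/2 - ln 2. -/
open Real intervalIntegral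

noncomputable def Fc1 : ℝ → ℝ := fun y =>
  -2*y + (1+y)^2/2 * Real.log (1+y) - (1+y)^2/4
    - (1-y)^2/2 * Real.log (1-y) + (1-y)^2/4

lemma Fc1_cont : Continuous Fc1 := by
  have h1 : Continuous fun y : ℝ => (1+y) * Real.log (1+y) :=
    Real.continuous_mul_log.comp (by continuity)
  have h2 : Continuous fun y : ℝ => (1-y) * Real.log (1-y) :=
    Real.continuous_mul_log.comp (by continuity)
  have : Fc1 = fun y =>
      -2*y + (1+y)/2 * ((1+y) * Real.log (1+y)) - (1+y)^2/4
        - (1-y)/2 * ((1-y) * Real.log (1-y)) + (1-y)^2/4 := by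
    funext y; simp only [Fc1]; ring
  rw [this]
  continuity

lemma fc1_cont : Continuous fun y : ℝ =>
    -2 + (1+y) * Real.log (1+y) + (1-y) * Real.log (1-y) := by
  have h1 : Continuous fun y : ℝ => (1+y) * Real.log (1+y) :=
    Real.continuous_mul_log.comp (by continuity)
  have h2 : Continuous fun y : ℝ => (1-y) * Real.log (1-y) :=
    Real.continuous_mul_log.comp (by continuity)
  continuity

lemma Fc1_deriv {y : ℝ} (hy : y ∈ Set.Ioo (-1:ℝ) 1) :
    HasDerivAt Fc1 (-2 + (1+y) * Real.log (1+y) + (1-y) * Real.log (1-y)) y := by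
  obtain ⟨hy1, hy2⟩ := hy
  have h1 : (0:ℝ) < 1 + y := by linarith
  have h2 : (0:ℝ) < 1 - y := by linarith
  have d1 : HasDerivAt (fun y:ℝ => 1+y) 1 y := (hasDerivAt_id y).const_add 1
  have d2 : HasDerivAt (fun y:ℝ => 1-y) (-1) y := by
    simpa using ((hasDerivAt_id y).const_sub 1)
  have dsq1 : HasDerivAt (fun y:ℝ => (1+y)^2/2) (1+y) y := by
    have := (d1.pow 2).div_const 2
    simpa using this
  have dsq2 : HasDerivAt (fun y:ℝ => (1-y)^2/2) (-(1-y)) y := by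
    have := (d2.pow 2).div_const 2
    refine this.congr_deriv ?_
    push_cast; ring
  have dlog1 : HasDerivAt (fun y:ℝ => Real.log (1+y)) (1/(1+y)) y := by
    have := (Real.hasDerivAt_log (ne_of_gt h1)).comp y d1
    exact this.congr_deriv (by ring)
  have dlog2 : HasDerivAt (fun y:ℝ => Real.log (1-y)) (-(1/(1-y))) y := by
    have := (Real.hasDerivAt_log (ne_of_gt h2)).comp y d2
    exact this.congr_deriv (by ring)
  have dA := dsq1.mul dlog1
  have dB := dsq2.mul dlog2
  have dC : HasDerivAt (fun y:ℝ => (1+y)^2/4) ((1+y)/2) y := by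
    have := (d1.pow 2).div_const 4
    refine this.congr_deriv ?_
    push_cast; ring
  have dD : HasDerivAt (fun y:ℝ => (1-y)^2/4) (-((1-y)/2)) y := by
    have := (d2.pow 2).div_const 4
    refine this.congr_deriv ?_
    push_cast; ring
  have dE : HasDerivAt (fun y:ℝ => -2*y) (-2) y := by
    simpa using (hasDerivAt_id y).const_mul (-2:ℝ)
  have := ((((dE.add dA).sub dC).sub dB).add dD)
  refine this.congr_deriv ?_
  field_simp
  ring

theorem C1_value :
    -(1/2 : ℝ) * ∫ y in (-1:ℝ)..1,
        (1/2 : ℝ) * (-2 + y * Real.log ((1 + y) / (1 - y)) + Real.log (1 - y ^ 2))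
      = 3/2 - Real.log 2 := by
  have key : (∫ y in (-1:ℝ)..1,
      (-2 + (1+y) * Real.log (1+y) + (1-y) * Real.log (1-y)))
      = Fc1 1 - Fc1 (-1) := by
    apply intervalIntegral.integral_eq_sub_of_hasDeriv_right_of_le (by norm_num)
      (Fc1_cont.continuousOn)
      (fun x hx => (Fc1_deriv hx).hasDerivWithinAt)
      (fc1_cont.intervalIntegrable _ _)
  have congr_ae : (∫ y in (-1:ℝ)..1,
      (1/2 : ℝ) * (-2 + y * Real.log ((1 + y) / (1 - y)) + Real.log (1 - y ^ 2)))
      = ∫ y in (-1:ℝ)..1,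
        (1/2 : ℝ) * (-2 + (1+y) * Real.log (1+y) + (1-y) * Real.log (1-y)) := by
    apply intervalIntegral.integral_congr_ae
    have h1 : ∀ᵐ x : ℝ, x ≠ (1:ℝ) := by
      rw [MeasureTheory.ae_iff]
      simp
    filter_upwards [h1] with x hx hmem
    rw [Set.uIoc_of_le (by norm_num : (-1:ℝ) ≤ 1)] at hmem
    obtain ⟨ha, hb⟩ := hmem
    have hb' : x < 1 := lt_of_le_of_ne hb hx
    have hp1 : (0:ℝ) < 1 + x := by linarith
    have hp2 : (0:ℝ) < 1 - x := by linarith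
    rw [Real.log_div (ne_of_gt hp1) (ne_of_gt hp2),
      show (1 - x^2 : ℝ) = (1+x)*(1-x) by ring,
      Real.log_mul (ne_of_gt hp1) (ne_of_gt hp2)]
    ring
  rw [congr_ae]
  rw [intervalIntegral.integral_const_mul, key]
  have : Fc1 1 - Fc1 (-1) = 4 * Real.log 2 - 6 := by
    simp [Fc1, Real.log_zero]
    norm_num
    ring
  rw [this]
  ring
end
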